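/- Let F ∈ F_q[x] be nonconstant with value set V_F of size r+1 ≥ 2, and suppose T(F) = θ(x^q - x)F' for some θ ∈ F_q*, where T = ∏_{γ ∈ V_F}(x - γ). Then F' ≠ 0, and there exists some γ ∈ V_F with T'(γ) = -θ. -/

import Mathlib

open Polynomial

theorem stmt_4 {Fq : Type*} [Field Fq] [Fintype Fq] [DecidableEq Fq]
    (q : ℕ) (hq : Fintype.card Fq = q)
    (F : Polynomial Fq) (hF : 0 < F.natDegree)
    (hcard : 2 ≤ (Finset.image (fun a => F.eval a) Finset.univ).card)
    (θ : Fq) (hθ : θ ≠ 0)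
    (T : Polynomial Fq)
    (hT : T = ∏ γ ∈ Finset.image (fun a => F.eval a) Finset.univ,
            (Polynomial.X - Polynomial.C γ))
    (heq : T.comp F = Polynomial.C θ * (Polynomial.X ^ q - Polynomial.X) *
      Polynomial.derivative F) :
    Polynomial.derivative F ≠ 0 ∧
    ∃ γ ∈ Finset.image (fun a => F.eval a) Finset.univ,
      (Polynomial.derivative T).eval γ = -θ := by
  set V := Finset.image (fun a => F.eval a) Finset.univ with hV
  have hTmonic : T.Monic := by
    rw [hT]; exact monic_prod_of_monic _ _ fun γ _ => monic_X_sub_C γ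
  have hFne : F ≠ C (F.coeff 0) := fun h => by
    rw [h] at hF; simp at hF
  have hcomp_ne : T.comp F ≠ 0 := by
    intro h
    rcases comp_eq_zero_iff.mp h with h1 | ⟨_, h2⟩
    · exact hTmonic.ne_zero h1
    · exact hFne h2
  have hF' : Polynomial.derivative F ≠ 0 := by
    intro h
    rw [h, mul_zero] at heq
    exact hcomp_ne heq
  refine ⟨hF', ?_⟩
  -- degrees
  have hq2 : 2 ≤ q := hq ▸ Fintype.one_lt_card
  have hXq : (X ^ q - X : Polynomial Fq).natDegree = q := by
    rw [natDegree_sub_eq_left_of_natDegree_lt] <;>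
      simp [natDegree_X_pow, natDegree_X] <;> omega
  have hXqne : (X ^ q - X : Polynomial Fq) ≠ 0 := by
    intro h
    have := hXq
    rw [h] at this
    simp at this
    omega
  have hTdeg : T.natDegree = V.card := by
    rw [hT]
    rw [natDegree_prod _ _ (fun γ _ => X_sub_C_ne_zero γ)]
    simp
  have hdegeq : V.card * F.natDegree = q + (derivative F).natDegree := by
    have h1 : (T.comp F).natDegree = V.card * F.natDegree := by
      rw [natDegree_comp, hTdeg]
    have h2 : (C θ * (X ^ q - X) * derivative F).natDegree
        = q + (derivative F).natDegree := by
      rw [mul_assoc, natDegree_C_mul hθ, natDegree_mul hXqne hF', hXq]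
    rw [heq, h2] at h1
    omega
  have hF'deg : (derivative F).natDegree < F.natDegree :=
    natDegree_derivative_lt (by omega)
  have h2d : 2 * F.natDegree ≤ V.card * F.natDegree :=
    Nat.mul_le_mul_right F.natDegree hcard
  have hF'q : (derivative F).natDegree < Fintype.card Fq := by omega
  -- find a with F'(a) ≠ 0
  obtain ⟨a, ha⟩ := Polynomial.exists_eval_ne_zero_of_natDegree_lt_card
    (derivative F) hF' (by simpa using hF'q)
  -- differentiate heq
  have hqzero : (q : Fq) = 0 := by rw [← hq]; exact FiniteField.cast_card_eq_zero Fq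
  have hder := congrArg Polynomial.derivative heq
  rw [derivative_comp] at hder
  have hder2 : derivative (C θ * (X ^ q - X) * derivative F)
      = C θ * (-1) * derivative F + C θ * (X ^ q - X) * derivative (derivative F) := by
    rw [derivative_mul, derivative_mul, derivative_C, derivative_sub,
      derivative_X_pow, derivative_X]
    simp [hqzero]
  rw [hder2] at hder
  have heval := congrArg (Polynomial.eval a) hder
  have haq : a ^ q = a := by rw [← hq]; exact FiniteField.pow_card a
  simp [haq] at heval
  refine ⟨F.eval a, Finset.mem_image.mpr ⟨a, Finset.mem_univ _, rfl⟩, ?_⟩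
  exact mul_left_cancel₀ ha (by linear_combination heval)
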